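/- Let w_1,…,w_n ∈ ℝ^d and a ∈ ℝ^d. For a permutation σ of {1,…,n}, let X^σ be the point cloud of the n+1 path positions x^σ_0 = a and x^σ_j = a + Σ_{k=1}^j w_{σ(k)} for j ∈ {1,…,n}, with unit weights. Then the average over all σ ∈ S_n satisfies (1/n!) Σ_{σ∈S_n} Rg²(X^σ) = ((n+2)/(12(n+1)))·(Σ_{k=1}^n ‖w_k‖² + ‖Σ_{k=1}^n w_k‖²). -/

import Mathlib

open Finset
open scoped RealInnerProductSpace

/-- Center of mass of a weighted point cloud. -/
noncomputable def com {V : Type*} [Fintype V] {d : ℕ}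
    (X : V → EuclideanSpace ℝ (Fin d)) (Ω : V → ℝ) : EuclideanSpace ℝ (Fin d) :=
  (∑ v, Ω v)⁻¹ • ∑ v, Ω v • X v

/-- Weighted squared radius of gyration of a point cloud. -/
noncomputable def rg2 {V : Type*} [Fintype V] {d : ℕ}
    (X : V → EuclideanSpace ℝ (Fin d)) (Ω : V → ℝ) : ℝ :=
  (∑ v, Ω v)⁻¹ * ∑ v, Ω v * ‖X v - com X Ω‖ ^ 2

/-- Center of mass with unit weights. -/
noncomputable def uMu {V : Type*} [Fintype V] {d : ℕ}
    (X : V → EuclideanSpace ℝ (Fin d)) : EuclideanSpace ℝ (Fin d) :=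
  (Fintype.card V : ℝ)⁻¹ • ∑ v, X v

/-- Squared radius of gyration with unit weights. -/
noncomputable def uRg2 {V : Type*} [Fintype V] {d : ℕ}
    (X : V → EuclideanSpace ℝ (Fin d)) : ℝ :=
  (Fintype.card V : ℝ)⁻¹ * ∑ v, ‖X v - uMu X‖ ^ 2

/- ---- auxiliary lemmas ---- -/

lemma sum_range_cast (m : ℕ) : ∑ i ∈ Finset.range m, (i:ℝ) = m*(m-1)/2 := by
  induction m with
  | zero => simp
  | succ m ih => rw [Finset.sum_range_succ, ih]; push_cast; ring

lemma sum_range_cast_sq (m : ℕ) : ∑ i ∈ Finset.range m, (i:ℝ)^2 = m*(m-1)*(2*m-1)/6 := by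
  induction m with
  | zero => simp
  | succ m ih => rw [Finset.sum_range_succ, ih]; push_cast; ring

lemma uRg2_eq {V : Type*} [Fintype V] {d : ℕ} (h : (Fintype.card V : ℝ) ≠ 0)
    (a : EuclideanSpace ℝ (Fin d)) (Y : V → EuclideanSpace ℝ (Fin d)) :
    uRg2 (fun v => a + Y v)
      = (Fintype.card V : ℝ)⁻¹ * ∑ v, ‖Y v‖^2
        - ((Fintype.card V : ℝ)⁻¹)^2 * ‖∑ v, Y v‖^2 := by
  set c : ℝ := (Fintype.card V : ℝ)⁻¹ with hc
  have hcc : (Fintype.card V : ℝ) * c = 1 := mul_inv_cancel₀ h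
  have hmu : uMu (fun v => a + Y v) = a + uMu Y := by
    rw [uMu, uMu, Finset.sum_add_distrib, Finset.sum_const, card_univ, smul_add,
      ← Nat.cast_smul_eq_nsmul ℝ, smul_smul, ← hc, inv_mul_cancel₀ h, one_smul]
  rw [uRg2, hmu]
  have hsub : ∀ v, (a + Y v) - (a + uMu Y) = Y v - uMu Y := fun v => add_sub_add_left_eq_sub _ _ _
  simp only [hsub]
  have hexp : ∀ v, ‖Y v - uMu Y‖^2 = ‖Y v‖^2 - 2 * ⟪Y v, uMu Y⟫ + ‖uMu Y‖^2 := by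
    intro v; rw [norm_sub_sq_real]
  rw [Finset.sum_congr rfl (fun v _ => hexp v)]
  rw [Finset.sum_add_distrib, Finset.sum_sub_distrib, ← Finset.mul_sum, ← sum_inner, Finset.sum_const,
    card_univ, nsmul_eq_mul]
  have h1 : ⟪∑ v, Y v, uMu Y⟫ = c * ‖∑ v, Y v‖^2 := by
    rw [uMu, real_inner_smul_right, real_inner_self_eq_norm_sq, ← hc]
  have h2 : ‖uMu Y‖^2 = c^2 * ‖∑ v, Y v‖^2 := by
    rw [uMu, norm_smul, mul_pow, Real.norm_eq_abs, sq_abs, ← hc]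
  rw [h1, h2]
  have : (Fintype.card V : ℝ) * (c ^ 2 * ‖∑ v, Y v‖ ^ 2) = c * ‖∑ v, Y v‖^2 := by
    rw [pow_two, ← mul_assoc, ← mul_assoc, hcc, one_mul]
  rw [this]; ring

lemma perm_sum_single {n : ℕ} (f : Fin n → ℝ) (k : Fin n) :
    (n:ℝ) * ∑ σ : Equiv.Perm (Fin n), f (σ k) = (Nat.factorial n : ℝ) * ∑ p, f p := by
  have hconst : ∀ k' : Fin n, ∑ σ : Equiv.Perm (Fin n), f (σ k') = ∑ σ : Equiv.Perm (Fin n), f (σ k) := by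
    intro k'
    calc ∑ σ : Equiv.Perm (Fin n), f (σ k')
        = ∑ σ : Equiv.Perm (Fin n), f ((Equiv.mulRight (Equiv.swap k k') σ) k) := by
          refine Finset.sum_congr rfl fun σ _ => ?_
          show f (σ k') = f ((σ * Equiv.swap k k') k)
          rw [Equiv.Perm.mul_apply, Equiv.swap_apply_left]
      _ = ∑ σ : Equiv.Perm (Fin n), f (σ k) :=
          Equiv.sum_comp (Equiv.mulRight (Equiv.swap k k')) (fun σ => f (σ k))
  have h1 : ∑ k' : Fin n, ∑ σ : Equiv.Perm (Fin n), f (σ k') = (n:ℝ) * ∑ σ : Equiv.Perm (Fin n), f (σ k) := by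
    rw [Finset.sum_congr rfl fun k' _ => hconst k', Finset.sum_const, card_univ, Fintype.card_fin,
      nsmul_eq_mul]
  rw [← h1, Finset.sum_comm]
  have h2 : ∀ σ : Equiv.Perm (Fin n), ∑ k' : Fin n, f (σ k') = ∑ p, f p := fun σ => Equiv.sum_comp σ f
  rw [Finset.sum_congr rfl fun σ _ => h2 σ, Finset.sum_const, card_univ, Fintype.card_perm,
    Fintype.card_fin, nsmul_eq_mul]

lemma perm_sum_pair {n : ℕ} (F : Fin n → Fin n → ℝ) {k l k' l' : Fin n} (hkl : k ≠ l) (h' : k' ≠ l') :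
    ∑ σ : Equiv.Perm (Fin n), F (σ k) (σ l) = ∑ σ : Equiv.Perm (Fin n), F (σ k') (σ l') := by
  set τ : Equiv.Perm (Fin n) := (Equiv.swap ((Equiv.swap k k') l) l') * (Equiv.swap k k') with hτ
  have h1 : (Equiv.swap k k') l ≠ k' := fun h =>
    hkl (((Equiv.swap k k').injective ((Equiv.swap_apply_left k k').trans h.symm)).symm ▸ rfl)
  have hτk : τ k = k' := by
    rw [hτ, Equiv.Perm.mul_apply]
    rw [Equiv.swap_apply_left k k']
    exact Equiv.swap_apply_of_ne_of_ne (Ne.symm h1) h'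
  have hτl : τ l = l' := by
    rw [hτ, Equiv.Perm.mul_apply, Equiv.swap_apply_left]
  symm
  calc ∑ σ : Equiv.Perm (Fin n), F (σ k') (σ l')
      = ∑ σ : Equiv.Perm (Fin n), F ((Equiv.mulRight τ σ) k) ((Equiv.mulRight τ σ) l) := by
        refine Finset.sum_congr rfl fun σ _ => ?_
        show F (σ k') (σ l') = F (σ (τ k)) (σ (τ l))
        rw [hτk, hτl]
    _ = ∑ σ : Equiv.Perm (Fin n), F (σ k) (σ l) :=
        Equiv.sum_comp (Equiv.mulRight τ) (fun ρ => F (ρ k) (ρ l))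

lemma norm_sq_sum_smul {d n : ℕ} (c : Fin n → ℝ) (v : Fin n → EuclideanSpace ℝ (Fin d)) :
    ‖∑ k, c k • v k‖^2 = ∑ k, ∑ l, c k * c l * ⟪v k, v l⟫ := by
  rw [← real_inner_self_eq_norm_sq, sum_inner]
  refine Finset.sum_congr rfl fun k _ => ?_
  rw [real_inner_smul_left, inner_sum, Finset.mul_sum]
  refine Finset.sum_congr rfl fun l _ => ?_
  rw [real_inner_smul_right]; ring

lemma g_diag {d n : ℕ} (hn : (n:ℝ) ≠ 0) (w : Fin n → EuclideanSpace ℝ (Fin d)) (k : Fin n) :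
    ∑ σ : Equiv.Perm (Fin n), ⟪w (σ k), w (σ k)⟫
      = (Nat.factorial n : ℝ) * (∑ p, ‖w p‖^2) / n := by
  have h := perm_sum_single (fun p => ‖w p‖^2) k
  have h2 : ∑ σ : Equiv.Perm (Fin n), ⟪w (σ k), w (σ k)⟫
      = ∑ σ : Equiv.Perm (Fin n), ‖w (σ k)‖^2 :=
    Finset.sum_congr rfl fun σ _ => real_inner_self_eq_norm_sq _
  rw [h2, eq_div_iff hn, mul_comm _ (n:ℝ), h]

lemma g_sum {d n : ℕ} (w : Fin n → EuclideanSpace ℝ (Fin d)) :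
    ∑ k : Fin n, ∑ l : Fin n, ∑ σ : Equiv.Perm (Fin n), ⟪w (σ k), w (σ l)⟫
      = (Nat.factorial n : ℝ) * ‖∑ p, w p‖^2 := by
  have h1 : ∀ σ : Equiv.Perm (Fin n), ∑ k : Fin n, ∑ l : Fin n, ⟪w (σ k), w (σ l)⟫ = ‖∑ p, w p‖^2 := by
    intro σ
    have hk : ∑ k : Fin n, w (σ k) = ∑ p, w p := Equiv.sum_comp σ w
    rw [← real_inner_self_eq_norm_sq, ← hk, sum_inner]
    refine Finset.sum_congr rfl fun k _ => ?_
    rw [inner_sum]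
  calc ∑ k : Fin n, ∑ l : Fin n, ∑ σ : Equiv.Perm (Fin n), ⟪w (σ k), w (σ l)⟫
      = ∑ k : Fin n, ∑ σ : Equiv.Perm (Fin n), ∑ l : Fin n, ⟪w (σ k), w (σ l)⟫ :=
        Finset.sum_congr rfl fun k _ => Finset.sum_comm
    _ = ∑ σ : Equiv.Perm (Fin n), ∑ k : Fin n, ∑ l : Fin n, ⟪w (σ k), w (σ l)⟫ :=
        Finset.sum_comm
    _ = ∑ σ : Equiv.Perm (Fin n), ‖∑ p, w p‖^2 := Finset.sum_congr rfl fun σ _ => h1 σ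
    _ = (Nat.factorial n : ℝ) * ‖∑ p, w p‖^2 := by
        rw [Finset.sum_const, card_univ, Fintype.card_perm, Fintype.card_fin, nsmul_eq_mul]

lemma g_off {d n : ℕ} (w : Fin n → EuclideanSpace ℝ (Fin d)) {k l : Fin n} (hkl : k ≠ l) :
    ∑ σ : Equiv.Perm (Fin n), ⟪w (σ k), w (σ l)⟫
      = (Nat.factorial n : ℝ) * (‖∑ p, w p‖^2 - ∑ p, ‖w p‖^2) / ((n:ℝ)^2 - n) := by
  have hn2 : 1 < n := by
    rcases Nat.lt_or_ge 1 n with h | h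
    · exact h
    · exfalso
      interval_cases n
      · exact absurd (Subsingleton.elim k l) hkl
      · exact absurd (Subsingleton.elim k l) hkl
  have hn0 : (n:ℝ) ≠ 0 := by positivity
  set G : ℝ := ∑ σ : Equiv.Perm (Fin n), ⟪w (σ k), w (σ l)⟫ with hG
  have hpt : ∀ k' l' : Fin n,
      (∑ σ : Equiv.Perm (Fin n), ⟪w (σ k'), w (σ l')⟫)
        = G + (if k' = l' then (∑ σ : Equiv.Perm (Fin n), ⟪w (σ k'), w (σ l')⟫) - G else 0) := by
    intro k' l'
    by_cases h : k' = l'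
    · simp [h]
    · simp only [h, if_false, add_zero]
      rw [hG]
      exact perm_sum_pair (fun p q => ⟪w p, w q⟫) h hkl
  have hsum := g_sum w
  rw [Finset.sum_congr rfl (fun k' _ => Finset.sum_congr rfl fun l' _ => hpt k' l')] at hsum
  simp only [Finset.sum_add_distrib, Finset.sum_const, card_univ, Fintype.card_fin,
    nsmul_eq_mul] at hsum
  have hdiagsum : ∀ k' : Fin n,
      (∑ l' : Fin n, if k' = l' then (∑ σ : Equiv.Perm (Fin n), ⟪w (σ k'), w (σ l')⟫) - G else 0)
        = (Nat.factorial n : ℝ) * (∑ p, ‖w p‖^2) / n - G := by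
    intro k'
    rw [Finset.sum_ite_eq univ k'
      (fun l' => (∑ σ : Equiv.Perm (Fin n), ⟪w (σ k'), w (σ l')⟫) - G)]
    rw [if_pos (Finset.mem_univ k'), g_diag hn0 w k']
  rw [Finset.sum_congr rfl fun k' _ => hdiagsum k'] at hsum
  rw [Finset.sum_const, card_univ, Fintype.card_fin, nsmul_eq_mul] at hsum
  have hne : (n:ℝ)^2 - n ≠ 0 := by
    have : (1:ℝ) < n := by exact_mod_cast hn2
    nlinarith
  have hne1 : (n:ℝ) - 1 ≠ 0 := by
    have : (1:ℝ) < n := by exact_mod_cast hn2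
    linarith
  field_simp at hsum ⊢
  nlinarith [hsum]

/-- Average squared radius of gyration of a random permuted path: for displacement
vectors `w₁,…,w_n` and start point `a`, with path positions
`x^σ_j = a + Σ_{k=1}^j w_{σ(k)}` for `j = 0,…,n` (unit weights),
`(1/n!) Σ_{σ∈S_n} Rg²(X^σ) = ((n+2)/(12(n+1)))·(Σ_k ‖w_k‖² + ‖Σ_k w_k‖²)`. -/
theorem average_rg2_random_path {d n : ℕ} (hd : 1 ≤ d) (hn : 1 ≤ n)
    (w : Fin n → EuclideanSpace ℝ (Fin d)) (a : EuclideanSpace ℝ (Fin d)) :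
    (Nat.factorial n : ℝ)⁻¹ *
        ∑ σ : Equiv.Perm (Fin n),
          uRg2 (fun j : Fin (n + 1) =>
            a + ∑ k : Fin n, if (k : ℕ) < (j : ℕ) then w (σ k) else 0)
      = (((n : ℝ) + 2) / (12 * ((n : ℝ) + 1))) *
          ((∑ k : Fin n, ‖w k‖ ^ 2) + ‖∑ k : Fin n, w k‖ ^ 2) := by
  have hn0 : (n:ℝ) ≠ 0 := by positivity
  have hN0 : ((n:ℝ)+1) ≠ 0 := by positivity
  have hfac : (Nat.factorial n : ℝ) ≠ 0 := by positivity
  set A : ℝ := ∑ k, ‖w k‖ ^ 2 with hA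
  set B : ℝ := ‖∑ k, w k‖ ^ 2 with hB
  set Gd : ℝ := (Nat.factorial n : ℝ) * A / n with hGd
  set Go : ℝ := (Nat.factorial n : ℝ) * (B - A) / ((n:ℝ)^2 - n) with hGo
  set c : Fin n → Fin (n+1) → ℝ := fun k j => if (k:ℕ) < (j:ℕ) then 1 else 0 with hc
  set b : Fin n → ℝ := fun k => ∑ j, c k j with hbdef
  set α : Fin n → Fin n → ℝ := fun k l => ∑ j : Fin (n+1), c k j * c l j with hα
  set S : Fin n → Fin n → ℝ :=
    fun k l => (((n:ℕ)+1 : ℝ))⁻¹ * α k l - ((((n:ℕ)+1 : ℝ))⁻¹)^2 * (b k * b l) with hS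
  -- step 1: rewrite each summand
  have h4 : ∀ σ : Equiv.Perm (Fin n),
      uRg2 (fun j : Fin (n + 1) =>
        a + ∑ k : Fin n, if (k : ℕ) < (j : ℕ) then w (σ k) else 0)
        = ∑ k, ∑ l, S k l * ⟪w (σ k), w (σ l)⟫ := by
    intro σ
    have h0 : ∀ j : Fin (n+1),
        (∑ k : Fin n, if (k : ℕ) < (j : ℕ) then w (σ k) else 0)
          = ∑ k : Fin n, c k j • w (σ k) := by
      intro j
      refine Finset.sum_congr rfl fun k _ => ?_
      by_cases h : (k:ℕ) < (j:ℕ) <;> simp [hc, h]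
    have hcard : ((Fintype.card (Fin (n+1)) : ℝ)) ≠ 0 := by
      rw [Fintype.card_fin]; positivity
    simp only [h0]
    rw [uRg2_eq hcard a (fun j => ∑ k : Fin n, c k j • w (σ k))]
    have E1 : ∑ j : Fin (n+1), ‖∑ k : Fin n, c k j • w (σ k)‖^2
        = ∑ k, ∑ l, α k l * ⟪w (σ k), w (σ l)⟫ := by
      calc ∑ j : Fin (n+1), ‖∑ k : Fin n, c k j • w (σ k)‖^2
          = ∑ j : Fin (n+1), ∑ k, ∑ l, c k j * c l j * ⟪w (σ k), w (σ l)⟫ :=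
            Finset.sum_congr rfl fun j _ => norm_sq_sum_smul (fun k => c k j) (fun k => w (σ k))
        _ = ∑ k, ∑ j : Fin (n+1), ∑ l, c k j * c l j * ⟪w (σ k), w (σ l)⟫ := Finset.sum_comm
        _ = ∑ k, ∑ l, ∑ j : Fin (n+1), c k j * c l j * ⟪w (σ k), w (σ l)⟫ :=
            Finset.sum_congr rfl fun k _ => Finset.sum_comm
        _ = ∑ k, ∑ l, α k l * ⟪w (σ k), w (σ l)⟫ := by
            refine Finset.sum_congr rfl fun k _ => Finset.sum_congr rfl fun l _ => ?_
            rw [hα, ← Finset.sum_mul]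
    have E2 : ‖∑ j : Fin (n+1), ∑ k : Fin n, c k j • w (σ k)‖^2
        = ∑ k, ∑ l, (b k * b l) * ⟪w (σ k), w (σ l)⟫ := by
      have hswap : ∑ j : Fin (n+1), ∑ k : Fin n, c k j • w (σ k)
          = ∑ k : Fin n, b k • w (σ k) := by
        rw [Finset.sum_comm]
        refine Finset.sum_congr rfl fun k _ => ?_
        rw [hbdef, ← Finset.sum_smul]
      rw [hswap, norm_sq_sum_smul]
    rw [E1, E2, Fintype.card_fin]
    rw [Finset.mul_sum, Finset.mul_sum, ← Finset.sum_sub_distrib]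
    refine Finset.sum_congr rfl fun k _ => ?_
    rw [Finset.mul_sum, Finset.mul_sum, ← Finset.sum_sub_distrib]
    refine Finset.sum_congr rfl fun l _ => ?_
    rw [hS]
    push_cast
    ring
  -- step 2: sum over permutations
  have hgkl : ∀ k l : Fin n,
      (∑ σ : Equiv.Perm (Fin n), ⟪w (σ k), w (σ l)⟫) = if k = l then Gd else Go := by
    intro k l
    by_cases h : k = l
    · subst h
      rw [if_pos rfl, hGd, hA]
      exact g_diag hn0 w k
    · rw [if_neg h, hGo, hA, hB]
      exact g_off w h
  have h5 : (∑ σ : Equiv.Perm (Fin n),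
      uRg2 (fun j : Fin (n + 1) =>
        a + ∑ k : Fin n, if (k : ℕ) < (j : ℕ) then w (σ k) else 0))
      = ∑ k, ∑ l, S k l * (if k = l then Gd else Go) := by
    rw [Finset.sum_congr rfl fun σ _ => h4 σ, Finset.sum_comm]
    refine Finset.sum_congr rfl fun k _ => ?_
    rw [Finset.sum_comm]
    refine Finset.sum_congr rfl fun l _ => ?_
    rw [← Finset.mul_sum, hgkl k l]
  have h6 : ∑ k, ∑ l, S k l * (if k = l then Gd else Go)
      = Go * (∑ k, ∑ l, S k l) + (Gd - Go) * (∑ k, S k k) := by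
    have hpt : ∀ k l : Fin n, S k l * (if k = l then Gd else Go)
        = S k l * Go + (if k = l then S k l * (Gd - Go) else 0) := by
      intro k l
      by_cases h : k = l <;> simp [h] <;> ring
    rw [Finset.sum_congr rfl fun k _ => Finset.sum_congr rfl fun l _ => hpt k l]
    simp only [Finset.sum_add_distrib]
    have hdg : ∀ k : Fin n, (∑ l, if k = l then S k l * (Gd - Go) else 0)
        = S k k * (Gd - Go) := by
      intro k
      rw [Finset.sum_ite_eq univ k (fun l => S k l * (Gd - Go)), if_pos (Finset.mem_univ k)]
    rw [Finset.sum_congr rfl fun k _ => hdg k, ← Finset.sum_mul]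
    rw [Finset.sum_congr rfl fun k (_ : k ∈ univ) => (Finset.sum_mul univ (fun l => S k l) Go).symm,
      ← Finset.sum_mul]
    ring
  -- step 3: scalar sums
  have hcol : ∀ j : Fin (n+1), (∑ k, c k j) = ((j:ℕ):ℝ) := by
    intro j
    have hj : (j:ℕ) ≤ n := Nat.lt_succ_iff.mp j.isLt
    rw [hc]
    rw [Fin.sum_univ_eq_sum_range (fun i => if i < (j:ℕ) then (1:ℝ) else 0) n]
    rw [Finset.sum_boole]
    rw [show (Finset.range n).filter (fun i => i < (j:ℕ)) = Finset.range (j:ℕ) by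
      ext i; simp only [Finset.mem_filter, Finset.mem_range]; omega]
    rw [Finset.card_range]
  have hb : ∀ k : Fin n, b k = (n:ℝ) - ((k:ℕ):ℝ) := by
    intro k
    simp only [hbdef, hc]
    rw [Fin.sum_univ_eq_sum_range (fun j => if (k:ℕ) < j then (1:ℝ) else 0) (n+1)]
    rw [Finset.sum_boole]
    rw [show (Finset.range (n+1)).filter (fun j => (k:ℕ) < j) = Finset.Ico ((k:ℕ)+1) (n+1) by
      ext i; simp only [Finset.mem_filter, Finset.mem_range, Finset.mem_Ico]; omega]
    rw [Nat.card_Ico, show (n+1) - ((k:ℕ)+1) = n - (k:ℕ) by omega,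
      Nat.cast_sub (le_of_lt k.isLt)]
  have hαd : ∀ k : Fin n, α k k = (n:ℝ) - ((k:ℕ):ℝ) := by
    intro k
    rw [← hb k, hα, hbdef]
    refine Finset.sum_congr rfl fun j _ => ?_
    rw [hc]
    by_cases h : (k:ℕ) < (j:ℕ) <;> simp [h]
  have hs1 : ∑ j : Fin (n+1), ((j:ℕ):ℝ) = (n:ℝ)*((n:ℝ)+1)/2 := by
    rw [Fin.sum_univ_eq_sum_range (fun i => (i:ℝ)) (n+1), sum_range_cast]
    push_cast; ring
  have hs2 : ∑ j : Fin (n+1), ((j:ℕ):ℝ)^2 = (n:ℝ)*((n:ℝ)+1)*(2*(n:ℝ)+1)/6 := by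
    rw [Fin.sum_univ_eq_sum_range (fun i => (i:ℝ)^2) (n+1), sum_range_cast_sq]
    push_cast; ring
  have hkssum : ∑ k : Fin n, ((k:ℕ):ℝ) = (n:ℝ)*((n:ℝ)-1)/2 := by
    rw [Fin.sum_univ_eq_sum_range (fun i => (i:ℝ)) n, sum_range_cast]
  have hkssq : ∑ k : Fin n, ((k:ℕ):ℝ)^2 = (n:ℝ)*((n:ℝ)-1)*(2*(n:ℝ)-1)/6 := by
    rw [Fin.sum_univ_eq_sum_range (fun i => (i:ℝ)^2) n, sum_range_cast_sq]
  have hbsum : ∑ k, b k = (n:ℝ)*((n:ℝ)+1)/2 := by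
    rw [Finset.sum_congr rfl fun k _ => hb k, Finset.sum_sub_distrib, Finset.sum_const,
      card_univ, Fintype.card_fin, nsmul_eq_mul, hkssum]
    ring
  have hαdsum : ∑ k, α k k = (n:ℝ)*((n:ℝ)+1)/2 := by
    rw [Finset.sum_congr rfl fun k _ => hαd k, Finset.sum_sub_distrib, Finset.sum_const,
      card_univ, Fintype.card_fin, nsmul_eq_mul, hkssum]
    ring
  have hbsq : ∑ k, (b k)^2 = (n:ℝ)*((n:ℝ)+1)*(2*(n:ℝ)+1)/6 := by
    have hterm : ∀ k : Fin n, (b k)^2 = (n:ℝ)^2 - 2*(n:ℝ)*((k:ℕ):ℝ) + ((k:ℕ):ℝ)^2 := by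
      intro k; rw [hb k]; ring
    rw [Finset.sum_congr rfl fun k _ => hterm k]
    rw [Finset.sum_add_distrib, Finset.sum_sub_distrib, Finset.sum_const, card_univ,
      Fintype.card_fin, nsmul_eq_mul, ← Finset.mul_sum, hkssum, hkssq]
    ring
  have hαsum : ∑ k, ∑ l, α k l = (n:ℝ)*((n:ℝ)+1)*(2*(n:ℝ)+1)/6 := by
    have h1 : ∑ k, ∑ l, α k l = ∑ j : Fin (n+1), (∑ k, c k j) * (∑ l, c l j) := by
      calc ∑ k : Fin n, ∑ l : Fin n, α k l
          = ∑ k : Fin n, ∑ l : Fin n, ∑ j : Fin (n+1), c k j * c l j := by rw [hα]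
        _ = ∑ k : Fin n, ∑ j : Fin (n+1), ∑ l : Fin n, c k j * c l j :=
            Finset.sum_congr rfl fun k _ => Finset.sum_comm
        _ = ∑ j : Fin (n+1), ∑ k : Fin n, ∑ l : Fin n, c k j * c l j := Finset.sum_comm
        _ = ∑ j : Fin (n+1), (∑ k, c k j) * (∑ l, c l j) := by
            refine Finset.sum_congr rfl fun j _ => ?_
            rw [Finset.sum_mul_sum]
    rw [h1, Finset.sum_congr rfl fun j _ => by rw [hcol j, ← pow_two], hs2]
  have hSsum : ∑ k, ∑ l, S k l
      = ((n:ℝ)+1)⁻¹ * ((n:ℝ)*((n:ℝ)+1)*(2*(n:ℝ)+1)/6)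
        - (((n:ℝ)+1)⁻¹)^2 * ((n:ℝ)*((n:ℝ)+1)/2)^2 := by
    have h1 : ∑ k : Fin n, ∑ l : Fin n, S k l
        = (((n:ℕ)+1:ℝ))⁻¹ * (∑ k, ∑ l, α k l)
          - ((((n:ℕ)+1:ℝ))⁻¹)^2 * ((∑ k, b k) * (∑ l, b l)) := by
      simp only [hS, Finset.sum_sub_distrib, ← Finset.mul_sum]
      rw [← Finset.sum_mul]
    rw [h1, hαsum, hbsum]
    push_cast
    ring
  have hSdsum : ∑ k, S k k
      = ((n:ℝ)+1)⁻¹ * ((n:ℝ)*((n:ℝ)+1)/2)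
        - (((n:ℝ)+1)⁻¹)^2 * ((n:ℝ)*((n:ℝ)+1)*(2*(n:ℝ)+1)/6) := by
    have h1 : ∑ k : Fin n, S k k
        = (((n:ℕ)+1:ℝ))⁻¹ * (∑ k, α k k) - ((((n:ℕ)+1:ℝ))⁻¹)^2 * (∑ k, (b k)^2) := by
      rw [hS]
      simp only [pow_two, Finset.sum_sub_distrib, ← Finset.mul_sum]
    rw [h1, hαdsum, hbsq]
  -- final computation
  rw [h5, h6, hSsum, hSdsum, hGd, hGo]
  rcases hn.lt_or_eq with hn2 | hn1
  · have hne : (n:ℝ)^2 - n ≠ 0 := by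
      have : (1:ℝ) < n := by exact_mod_cast hn2
      nlinarith
    have hne1 : (n:ℝ) - 1 ≠ 0 := by
      have : (1:ℝ) < n := by exact_mod_cast hn2
      linarith
    field_simp
    ring
  · -- n = 1
    subst hn1
    have hBA : B = A := by
      rw [hA, hB]
      simp
    rw [hBA]
    norm_num
    ring
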